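/- arXiv:1105.4088 — 2 statements merged into one kernel-verified Lean document; each statement's English description precedes it below -/
import Mathlib

section
/- Let L̃, L ∈ ℕ₀, let X be a normed space over ℂ, and let x_{-L̃}, …, x_L be elements of X. Suppose that ‖∑_{ℓ=-L̃}^{L} ω^ℓ x_ℓ‖_X = o(|ω|^L) uniformly as ω → 0 within ℂ₊ \ {0}; that is, for every ε > 0 there exists δ > 0 such that for all ω ∈ ℂ₊ with 0 < |ω| < δ one has ‖∑_{ℓ=-L̃}^{L} ω^ℓ x_ℓ‖_X ≤ ε·|ω|^L. Then x_ℓ = 0 for every ℓ ∈ {-L̃, …, L}. (Lemma 3.3: uniqueness of asymptotic expansions.) -/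
open Finset

/-- Auxiliary: a polynomial with values o(t^N) along positive reals has zero coefficients. -/
lemma poly_coeff_zero {X : Type*} [NormedAddCommGroup X] [NormedSpace ℂ X] :
    ∀ (N : ℕ) (c : ℕ → X),
      (∀ ε : ℝ, 0 < ε → ∃ δ : ℝ, 0 < δ ∧ ∀ t : ℝ, 0 < t → t < δ →
        ‖∑ k ∈ range (N + 1), (t : ℂ) ^ k • c k‖ ≤ ε * t ^ N) →
      ∀ k ≤ N, c k = 0 := by
  intro N
  induction N with
  | zero =>
    intro c h k hk
    interval_cases k
    have : ∀ ε : ℝ, 0 < ε → ‖c 0‖ ≤ ε := by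
      intro ε hε
      obtain ⟨δ, hδ, hδ'⟩ := h ε hε
      have := hδ' (δ/2) (by linarith) (by linarith)
      simpa using this
    have h0 : ‖c 0‖ ≤ 0 := by
      by_contra hpos
      push_neg at hpos
      have := this (‖c 0‖ / 2) (by linarith)
      linarith
    simpa using norm_le_zero_iff.mp h0
  | succ N ih =>
    intro c h k hk
    -- Step 1: c 0 = 0
    set M : ℝ := ∑ k ∈ range (N + 1), ‖c (k + 1)‖ with hM
    have hM0 : 0 ≤ M := Finset.sum_nonneg fun _ _ => norm_nonneg _
    have hc0 : c 0 = 0 := by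
      have key : ∀ ε : ℝ, 0 < ε → ‖c 0‖ ≤ ε := by
        intro ε hε
        obtain ⟨δ, hδ, hδ'⟩ := h 1 one_pos
        set t : ℝ := min (δ/2) (min 1 (ε / (1 + M))) with ht
        have ht0 : 0 < t := by
          apply lt_min (by linarith) (lt_min one_pos (by positivity))
        have ht1 : t ≤ 1 := le_trans (min_le_right _ _) (min_le_left _ _)
        have htδ : t < δ := lt_of_le_of_lt (min_le_left _ _) (by linarith)
        have htε : t * (1 + M) ≤ ε := by
          have : t ≤ ε / (1 + M) := le_trans (min_le_right _ _) (min_le_right _ _)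
          calc t * (1 + M) ≤ (ε / (1 + M)) * (1 + M) := by
                apply mul_le_mul_of_nonneg_right this (by linarith)
            _ = ε := by field_simp
        have hS := hδ' t ht0 htδ
        have hsplit : ∑ k ∈ range (N + 2), (t : ℂ) ^ k • c k
            = (∑ k ∈ range (N + 1), (t : ℂ) ^ (k + 1) • c (k + 1)) + c 0 := by
          rw [Finset.sum_range_succ']
          simp
        have hT : ‖∑ k ∈ range (N + 1), (t : ℂ) ^ (k + 1) • c (k + 1)‖ ≤ t * M := by
          calc ‖∑ k ∈ range (N + 1), (t : ℂ) ^ (k + 1) • c (k + 1)‖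
              ≤ ∑ k ∈ range (N + 1), ‖(t : ℂ) ^ (k + 1) • c (k + 1)‖ :=
                norm_sum_le _ _
            _ = ∑ k ∈ range (N + 1), t ^ (k + 1) * ‖c (k + 1)‖ := by
                apply Finset.sum_congr rfl
                intro k _
                rw [norm_smul, norm_pow, Complex.norm_real, Real.norm_eq_abs,
                  abs_of_pos ht0]
            _ ≤ ∑ k ∈ range (N + 1), t * ‖c (k + 1)‖ := by
                apply Finset.sum_le_sum
                intro k _
                apply mul_le_mul_of_nonneg_right _ (norm_nonneg _)
                calc t ^ (k + 1) ≤ t ^ 1 := pow_le_pow_of_le_one ht0.le ht1 (by omega)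
                  _ = t := pow_one t
            _ = t * M := by rw [hM, Finset.mul_sum]
        have htN : t ^ (N + 1) ≤ t := by
          calc t ^ (N + 1) ≤ t ^ 1 := pow_le_pow_of_le_one ht0.le ht1 (by omega)
            _ = t := pow_one t
        have : ‖c 0‖ ≤ 1 * t ^ (N + 1) + t * M := by
          have : c 0 = (∑ k ∈ range (N + 2), (t : ℂ) ^ k • c k)
              - (∑ k ∈ range (N + 1), (t : ℂ) ^ (k + 1) • c (k + 1)) := by
            rw [hsplit]; abel
          rw [this]
          exact le_trans (norm_sub_le _ _) (add_le_add hS hT)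
        calc ‖c 0‖ ≤ 1 * t ^ (N + 1) + t * M := this
          _ ≤ t + t * M := by linarith
          _ = t * (1 + M) := by ring
          _ ≤ ε := htε
      have h0 : ‖c 0‖ ≤ 0 := by
        by_contra hpos
        push_neg at hpos
        have := key (‖c 0‖ / 2) (by linarith)
        linarith
      simpa using norm_le_zero_iff.mp h0
    -- Step 2: apply IH to shifted coefficients
    have hshift : ∀ j ≤ N, c (j + 1) = 0 := by
      apply ih (fun k => c (k + 1))
      intro ε hε
      obtain ⟨δ, hδ, hδ'⟩ := h ε hε
      refine ⟨δ, hδ, fun t ht0 htδ => ?_⟩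
      have hS := hδ' t ht0 htδ
      have hsplit : ∑ k ∈ range (N + 2), (t : ℂ) ^ k • c k
          = (t : ℂ) • ∑ k ∈ range (N + 1), (t : ℂ) ^ k • c (k + 1) := by
        rw [Finset.sum_range_succ', hc0, Finset.smul_sum]
        simp [smul_smul, pow_succ, mul_comm]
      rw [hsplit] at hS
      rw [norm_smul, Complex.norm_real, Real.norm_eq_abs, abs_of_pos ht0] at hS
      have : t * ‖∑ k ∈ range (N + 1), (t : ℂ) ^ k • c (k + 1)‖
          ≤ t * (ε * t ^ N) := by
        calc t * ‖∑ k ∈ range (N + 1), (t : ℂ) ^ k • c (k + 1)‖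
            ≤ ε * t ^ (N + 1) := hS
          _ = t * (ε * t ^ N) := by ring
      exact le_of_mul_le_mul_left this ht0
    rcases Nat.eq_zero_or_eq_succ_pred k with hk0 | hk1
    · rw [hk0]; exact hc0
    · rw [hk1]; exact hshift _ (by omega)

/-- Lemma 3.3 (uniqueness of asymptotic expansions): if the finite Laurent-type sum
`∑_{ℓ=-Lt}^{L} ω^ℓ • x ℓ` is `o(|ω|^L)` uniformly as `ω → 0` within the closed upper
half plane minus the origin, then all coefficients `x ℓ` vanish. -/
theorem uniqueness_of_asymptotic_expansions
    (Lt L : ℕ) {X : Type*} [NormedAddCommGroup X] [NormedSpace ℂ X]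
    (x : ℤ → X)
    (h : ∀ ε : ℝ, 0 < ε → ∃ δ : ℝ, 0 < δ ∧ ∀ ω : ℂ, 0 ≤ ω.im → 0 < ‖ω‖ → ‖ω‖ < δ →
      ‖∑ ℓ ∈ Finset.Icc (-(Lt : ℤ)) (L : ℤ), ω ^ ℓ • x ℓ‖ ≤ ε * ‖ω‖ ^ (L : ℕ)) :
    ∀ ℓ ∈ Finset.Icc (-(Lt : ℤ)) (L : ℤ), x ℓ = 0 := by
  have main : ∀ k ≤ Lt + L, x ((k : ℤ) - Lt) = 0 := by
    apply poly_coeff_zero (Lt + L) (fun k => x ((k : ℤ) - Lt))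
    intro ε hε
    obtain ⟨δ, hδ, hδ'⟩ := h ε hε
    refine ⟨min δ 1, lt_min hδ one_pos, fun t ht0 htδ => ?_⟩
    have htδ' : t < δ := lt_of_lt_of_le htδ (min_le_left _ _)
    have ht1 : t < 1 := lt_of_lt_of_le htδ (min_le_right _ _)
    have htC : ‖(t : ℂ)‖ = t := by
      rw [Complex.norm_real, Real.norm_eq_abs, abs_of_pos ht0]
    have htC0 : (t : ℂ) ≠ 0 := by
      simp only [ne_eq, Complex.ofReal_eq_zero]
      exact ht0.ne'
    have hS := hδ' (t : ℂ) (by simp) (by rw [htC]; exact ht0) (by rw [htC]; exact htδ')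
    rw [htC] at hS
    have hkey : ∑ k ∈ range (Lt + L + 1), (t : ℂ) ^ k • x ((k : ℤ) - Lt)
        = (t : ℂ) ^ Lt • ∑ ℓ ∈ Finset.Icc (-(Lt : ℤ)) (L : ℤ), (t : ℂ) ^ ℓ • x ℓ := by
      rw [Finset.smul_sum]
      refine Finset.sum_nbij' (fun k => (k : ℤ) - Lt)
        (fun ℓ => (ℓ + Lt).toNat) ?_ ?_ ?_ ?_ ?_
      · intro k hk
        simp only [Finset.mem_range] at hk
        simp only [Finset.mem_Icc]
        omega
      · intro ℓ hℓ
        simp only [Finset.mem_Icc] at hℓ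
        simp only [Finset.mem_range]
        omega
      · intro k hk; simp only [Finset.mem_range] at hk; omega
      · intro ℓ hℓ; simp only [Finset.mem_Icc] at hℓ; omega
      · intro k hk
        simp only [Finset.mem_range] at hk
        rw [smul_smul]
        congr 1
        rw [← zpow_natCast (t : ℂ) Lt, ← zpow_add₀ htC0]
        rw [← zpow_natCast (t : ℂ) k]
        congr 1
        omega
    rw [hkey, norm_smul, norm_pow, htC]
    calc t ^ Lt * ‖∑ ℓ ∈ Finset.Icc (-(Lt : ℤ)) (L : ℤ), (t : ℂ) ^ ℓ • x ℓ‖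
        ≤ t ^ Lt * (ε * t ^ L) :=
          mul_le_mul_of_nonneg_left hS (by positivity)
      _ = ε * t ^ (Lt + L) := by ring
  intro ℓ hℓ
  simp only [Finset.mem_Icc] at hℓ
  have := main (ℓ + Lt).toNat (by omega)
  have heq : ((ℓ + Lt).toNat : ℤ) - Lt = ℓ := by omega
  rwa [heq] at this
end

section
/- Let N ≥ 3 be an odd natural number, and let s, t ∈ ℝ satisfy s > 1/2, t < -1/2 and t ≤ s - (N+1)/2. Then there exists a constant C > 0 such that for every measurable function f : ℝ^N → ℂ with ∫_{ℝ^N} (1+|y|²)^s |f(y)|² dy < ∞, the integral (Tf)(x) = ∫_{ℝ^N} |x-y|^{1-N} f(y) dy converges absolutely for almost every x ∈ ℝ^N and satisfies ∫_{ℝ^N} (1+|x|²)^t |(Tf)(x)|² dx ≤ C² · ∫_{ℝ^N} (1+|y|²)^s |f(y)|² dy. In other words, the integral operator with kernel |x-y|^{1-N} is a bounded linear operator from L²_s(ℝ^N) to L²_t(ℝ^N). (The J = 0 case of the kernel boundedness established in the proof of Lemma 3.15.) -/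
set_option maxHeartbeats 1000000

open MeasureTheory Metric ENNReal Set

lemma rpow_mul_pow_helper {r c : ℝ} (hr : 0 < r) (hc : 0 < c) (e : ℝ) (k : ℕ) :
    (r * c ^ k) ^ e = r ^ e * (c ^ e) ^ k := by
  rw [Real.mul_rpow hr.le (pow_nonneg hc.le k), ← Real.rpow_natCast c k,
    ← Real.rpow_mul hc.le, mul_comm (k:ℝ) e, Real.rpow_mul hc.le, Real.rpow_natCast]

lemma euclidean_nontrivial {N : ℕ} (hN : 1 ≤ N) : Nontrivial (EuclideanSpace ℝ (Fin N)) :=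
  Module.nontrivial_of_finrank_pos (R := ℝ)
    (by rw [finrank_euclideanSpace_fin]; exact hN)

lemma volume_ball_eq {N : ℕ} (hN : 1 ≤ N) (x : EuclideanSpace ℝ (Fin N)) {r : ℝ} (hr : 0 ≤ r) :
    volume (ball x r) = ENNReal.ofReal (r ^ N) * volume (ball (0 : EuclideanSpace ℝ (Fin N)) 1) := by
  haveI := euclidean_nontrivial hN
  rw [Measure.addHaar_ball volume x hr, finrank_euclideanSpace_fin]

lemma lintegral_ball_rpow_le (N : ℕ) (hN : 1 ≤ N) (p : ℝ) (hpN : -(N:ℝ) < p) (hp : p ≤ 0) :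
    ∃ C : ℝ≥0∞, C ≠ ∞ ∧ ∀ (x : EuclideanSpace ℝ (Fin N)) (r : ℝ), 0 < r →
      ∫⁻ y in ball x r, ENNReal.ofReal (‖x - y‖ ^ p)
        ≤ C * ENNReal.ofReal (r ^ ((N:ℝ) + p)) := by
  classical
  set E := EuclideanSpace ℝ (Fin N)
  set v : ℝ≥0∞ := volume (ball (0 : E) 1) with hv
  have hvne : v ≠ ∞ := measure_ball_lt_top.ne
  set q : ℝ≥0∞ := ENNReal.ofReal ((1/2 : ℝ) ^ ((N:ℝ) + p)) with hqdef
  have hNp : 0 < (N:ℝ) + p := by linarith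
  have hq1 : q < 1 := by
    rw [hqdef, ← ENNReal.ofReal_one]
    exact ENNReal.ofReal_lt_ofReal_iff one_pos |>.2
      (Real.rpow_lt_one (by norm_num) (by norm_num) hNp)
  have hq1' : (1 : ℝ≥0∞) - q ≠ 0 := by
    simp only [ne_eq, tsub_eq_zero_iff_le, not_le]; exact hq1
  refine ⟨ENNReal.ofReal ((2:ℝ) ^ (-p)) * (1 - q)⁻¹ * v, ?_, ?_⟩
  · exact ENNReal.mul_ne_top (ENNReal.mul_ne_top ENNReal.ofReal_ne_top
      (ENNReal.inv_ne_top.2 hq1')) hvne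
  intro x r hr
  haveI := euclidean_nontrivial hN
  set ρ : ℕ → ℝ := fun k => r * (1/2 : ℝ) ^ k with hρ
  have hρpos : ∀ k, 0 < ρ k := fun k => mul_pos hr (by positivity)
  set A : ℕ → Set E := fun k => {y | ρ (k+1) ≤ ‖x - y‖} ∩ ball x (ρ k) with hA
  -- covering
  have hcover : ball x r \ {x} ⊆ ⋃ k, A k := by
    rintro y ⟨hy, hyx⟩
    have hyx' : y ≠ x := by simpa using hyx
    have hd : 0 < ‖x - y‖ := by
      rw [norm_pos_iff, sub_ne_zero]; exact fun h => hyx' h.symm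
    have hdr : ‖x - y‖ < r := by
      rw [mem_ball, dist_eq_norm, ← norm_sub_rev] at hy; exact hy
    have hex : ∃ k, ρ (k+1) ≤ ‖x - y‖ := by
      obtain ⟨n, hn⟩ := exists_pow_lt_of_lt_one (div_pos hd hr) (by norm_num : (1/2:ℝ) < 1)
      refine ⟨n, le_of_lt ?_⟩
      have h1 : ρ (n+1) ≤ r * (1/2:ℝ)^n := by
        simp only [hρ]
        have : ((1:ℝ)/2)^(n+1) ≤ (1/2:ℝ)^n :=
          pow_le_pow_of_le_one (by norm_num) (by norm_num) (Nat.le_succ n)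
        nlinarith
      calc ρ (n+1) ≤ r * (1/2:ℝ)^n := h1
        _ < r * (‖x - y‖ / r) := by
            exact mul_lt_mul_of_pos_left hn hr
        _ = ‖x - y‖ := by field_simp
    set k₀ := Nat.find hex with hk₀
    have hlow : ρ (k₀+1) ≤ ‖x - y‖ := Nat.find_spec hex
    have hup : ‖x - y‖ < ρ k₀ := by
      rcases Nat.eq_zero_or_pos k₀ with h0 | hpos
      · rw [h0]; simpa [hρ] using hdr
      · obtain ⟨m, hm⟩ := Nat.exists_eq_succ_of_ne_zero hpos.ne'
        have := Nat.find_min hex (m := m) (by omega)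
        rw [hm]; exact lt_of_not_ge this
    exact mem_iUnion.2 ⟨k₀, ⟨hlow, by rw [mem_ball, dist_eq_norm, ← norm_sub_rev]; exact hup⟩⟩
  have hstep1 : ∫⁻ y in ball x r, ENNReal.ofReal (‖x - y‖ ^ p)
      ≤ ∑' k, ∫⁻ y in A k, ENNReal.ofReal (‖x - y‖ ^ p) := by
    have hae : (ball x r : Set E) =ᵐ[volume] (ball x r \ {x} : Set E) :=
      (diff_ae_eq_self.2 (measure_mono_null inter_subset_right (measure_singleton x))).symm
    calc ∫⁻ y in ball x r, ENNReal.ofReal (‖x - y‖ ^ p)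
        = ∫⁻ y in ball x r \ {x}, ENNReal.ofReal (‖x - y‖ ^ p) := setLIntegral_congr hae
      _ ≤ ∫⁻ y in ⋃ k, A k, ENNReal.ofReal (‖x - y‖ ^ p) := lintegral_mono_set hcover
      _ ≤ ∑' k, ∫⁻ y in A k, ENNReal.ofReal (‖x - y‖ ^ p) := lintegral_iUnion_le _ _
  have hterm : ∀ k, ∫⁻ y in A k, ENNReal.ofReal (‖x - y‖ ^ p)
      ≤ (ENNReal.ofReal ((2:ℝ) ^ (-p)) * ENNReal.ofReal (r ^ ((N:ℝ) + p)) * v) * q ^ k := by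
    intro k
    have h1 : ∫⁻ y in A k, ENNReal.ofReal (‖x - y‖ ^ p)
        ≤ ENNReal.ofReal (ρ (k+1) ^ p) * volume (A k) := by
      rw [← setLIntegral_const]
      refine setLIntegral_mono measurable_const fun y hy => ?_
      exact ENNReal.ofReal_le_ofReal (Real.rpow_le_rpow_of_nonpos (hρpos _) hy.1 hp)
    have h2 : volume (A k) ≤ ENNReal.ofReal (ρ k ^ N) * v := by
      calc volume (A k) ≤ volume (ball x (ρ k)) := measure_mono inter_subset_right
        _ = ENNReal.ofReal (ρ k ^ N) * v := volume_ball_eq hN x (hρpos k).le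
    have hkey : ρ (k+1) ^ p * ρ k ^ N
        = ((2:ℝ) ^ (-p) * r ^ ((N:ℝ) + p)) * ((1/2:ℝ) ^ ((N:ℝ) + p)) ^ k := by
      have e1 : ρ (k+1) ^ p = r ^ p * ((1/2:ℝ) ^ p) ^ (k+1) := by
        rw [hρ]; exact rpow_mul_pow_helper hr (by norm_num) p (k+1)
      have e2 : (ρ k : ℝ) ^ N = r ^ (N:ℝ) * ((1/2:ℝ) ^ (N:ℝ)) ^ k := by
        have := rpow_mul_pow_helper hr (by norm_num : (0:ℝ) < 1/2) (N:ℝ) k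
        rw [hρ]
        rw [← Real.rpow_natCast (r * (1/2:ℝ)^k) N]; exact this
      have e3 : ((1/2:ℝ) ^ ((N:ℝ) + p)) = (1/2:ℝ) ^ (N:ℝ) * (1/2:ℝ) ^ p :=
        Real.rpow_add (by norm_num) _ _
      have e4 : r ^ ((N:ℝ) + p) = r ^ (N:ℝ) * r ^ p := Real.rpow_add hr _ _
      have e5 : ((1/2:ℝ) ^ p) ^ (k+1) = (1/2:ℝ)^p * ((1/2:ℝ)^p)^k := pow_succ' _ _
      have e6 : (1/2:ℝ) ^ p = (2:ℝ) ^ (-p) := by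
        rw [Real.rpow_neg (by norm_num), ← Real.inv_rpow (by norm_num)]; norm_num
      rw [e1, e2, e3, e4, e5, e6, mul_pow]; ring
    calc ∫⁻ y in A k, ENNReal.ofReal (‖x - y‖ ^ p)
        ≤ ENNReal.ofReal (ρ (k+1) ^ p) * (ENNReal.ofReal (ρ k ^ N) * v) :=
          h1.trans (mul_le_mul_right h2 _)
      _ = ENNReal.ofReal (ρ (k+1) ^ p * ρ k ^ N) * v := by
          rw [← mul_assoc, ← ENNReal.ofReal_mul (Real.rpow_nonneg (hρpos _).le _)]
      _ = (ENNReal.ofReal ((2:ℝ) ^ (-p)) * ENNReal.ofReal (r ^ ((N:ℝ) + p)) * v) * q ^ k := by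
          rw [hkey, ENNReal.ofReal_mul (by positivity), ENNReal.ofReal_mul (by positivity),
            ENNReal.ofReal_pow (by positivity), ← hqdef]
          ring
  calc ∫⁻ y in ball x r, ENNReal.ofReal (‖x - y‖ ^ p)
      ≤ ∑' k, ∫⁻ y in A k, ENNReal.ofReal (‖x - y‖ ^ p) := hstep1
    _ ≤ ∑' k, (ENNReal.ofReal ((2:ℝ) ^ (-p)) * ENNReal.ofReal (r ^ ((N:ℝ) + p)) * v) * q ^ k :=
        ENNReal.tsum_le_tsum hterm
    _ = (ENNReal.ofReal ((2:ℝ) ^ (-p)) * ENNReal.ofReal (r ^ ((N:ℝ) + p)) * v) * (1 - q)⁻¹ := by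
        rw [ENNReal.tsum_mul_left, ENNReal.tsum_geometric]
    _ = ENNReal.ofReal ((2:ℝ) ^ (-p)) * (1 - q)⁻¹ * v * ENNReal.ofReal (r ^ ((N:ℝ) + p)) := by
        ring

lemma lintegral_compl_ball_rpow_le (N : ℕ) (hN : 1 ≤ N) (q : ℝ) (hqN : (N:ℝ) < q) :
    ∃ C : ℝ≥0∞, C ≠ ∞ ∧ ∀ (x : EuclideanSpace ℝ (Fin N)) (r : ℝ), 0 < r →
      ∫⁻ y in (ball x r)ᶜ, ENNReal.ofReal (‖x - y‖ ^ (-q))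
        ≤ C * ENNReal.ofReal (r ^ ((N:ℝ) - q)) := by
  classical
  set E := EuclideanSpace ℝ (Fin N)
  set v : ℝ≥0∞ := volume (ball (0 : E) 1) with hv
  have hvne : v ≠ ∞ := measure_ball_lt_top.ne
  set w : ℝ≥0∞ := ENNReal.ofReal ((2 : ℝ) ^ ((N:ℝ) - q)) with hwdef
  have hNq : (N:ℝ) - q < 0 := by linarith
  have hw1 : w < 1 := by
    rw [hwdef, ← ENNReal.ofReal_one]
    exact ENNReal.ofReal_lt_ofReal_iff one_pos |>.2
      (Real.rpow_lt_one_of_one_lt_of_neg (by norm_num) hNq)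
  have hw1' : (1 : ℝ≥0∞) - w ≠ 0 := by
    simp only [ne_eq, tsub_eq_zero_iff_le, not_le]; exact hw1
  refine ⟨ENNReal.ofReal ((2:ℝ) ^ (N:ℝ)) * (1 - w)⁻¹ * v, ?_, ?_⟩
  · exact ENNReal.mul_ne_top (ENNReal.mul_ne_top ENNReal.ofReal_ne_top
      (ENNReal.inv_ne_top.2 hw1')) hvne
  intro x r hr
  haveI := euclidean_nontrivial hN
  set ρ : ℕ → ℝ := fun k => r * (2 : ℝ) ^ k with hρ
  have hρpos : ∀ k, 0 < ρ k := fun k => mul_pos hr (by positivity)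
  set A : ℕ → Set E := fun k => {y | ρ k ≤ ‖x - y‖} ∩ ball x (ρ (k+1)) with hA
  have hcover : (ball x r)ᶜ ⊆ ⋃ k, A k := by
    intro y hy
    have hdr : r ≤ ‖x - y‖ := by
      rw [mem_compl_iff, mem_ball, dist_eq_norm, ← norm_sub_rev] at hy; linarith [not_lt.1 hy]
    have hex : ∃ k, ‖x - y‖ < ρ (k+1) := by
      obtain ⟨n, hn⟩ := pow_unbounded_of_one_lt (‖x - y‖ / r) (by norm_num : (1:ℝ) < 2)
      refine ⟨n, ?_⟩
      have h2 : (2:ℝ)^n ≤ (2:ℝ)^(n+1) := by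
        apply pow_le_pow_right₀ (by norm_num) (Nat.le_succ n)
      have := (div_lt_iff₀ hr).1 hn
      simp only [hρ]
      nlinarith
    set k₀ := Nat.find hex with hk₀
    have hup : ‖x - y‖ < ρ (k₀+1) := Nat.find_spec hex
    have hlow : ρ k₀ ≤ ‖x - y‖ := by
      rcases Nat.eq_zero_or_pos k₀ with h0 | hpos
      · rw [h0]; simpa [hρ] using hdr
      · obtain ⟨m, hm⟩ := Nat.exists_eq_succ_of_ne_zero hpos.ne'
        have := Nat.find_min hex (m := m) (by omega)
        rw [hm]; exact not_lt.1 this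
    exact mem_iUnion.2 ⟨k₀, ⟨hlow, by rw [mem_ball, dist_eq_norm, ← norm_sub_rev]; exact hup⟩⟩
  have hstep1 : ∫⁻ y in (ball x r)ᶜ, ENNReal.ofReal (‖x - y‖ ^ (-q))
      ≤ ∑' k, ∫⁻ y in A k, ENNReal.ofReal (‖x - y‖ ^ (-q)) :=
    (lintegral_mono_set hcover).trans (lintegral_iUnion_le _ _)
  have hterm : ∀ k, ∫⁻ y in A k, ENNReal.ofReal (‖x - y‖ ^ (-q))
      ≤ (ENNReal.ofReal ((2:ℝ) ^ (N:ℝ)) * ENNReal.ofReal (r ^ ((N:ℝ) - q)) * v) * w ^ k := by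
    intro k
    have h1 : ∫⁻ y in A k, ENNReal.ofReal (‖x - y‖ ^ (-q))
        ≤ ENNReal.ofReal (ρ k ^ (-q)) * volume (A k) := by
      rw [← setLIntegral_const]
      refine setLIntegral_mono measurable_const fun y hy => ?_
      exact ENNReal.ofReal_le_ofReal
        (Real.rpow_le_rpow_of_nonpos (hρpos _) hy.1 (by linarith : -q ≤ 0))
    have h2 : volume (A k) ≤ ENNReal.ofReal (ρ (k+1) ^ N) * v := by
      calc volume (A k) ≤ volume (ball x (ρ (k+1))) := measure_mono inter_subset_right
        _ = ENNReal.ofReal (ρ (k+1) ^ N) * v := volume_ball_eq hN x (hρpos (k+1)).le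
    have hkey : ρ k ^ (-q) * ρ (k+1) ^ N
        = ((2:ℝ) ^ (N:ℝ) * r ^ ((N:ℝ) - q)) * ((2:ℝ) ^ ((N:ℝ) - q)) ^ k := by
      have e1 : ρ k ^ (-q) = r ^ (-q) * ((2:ℝ) ^ (-q)) ^ k := by
        rw [hρ]; exact rpow_mul_pow_helper hr (by norm_num) (-q) k
      have e2 : (ρ (k+1) : ℝ) ^ N = r ^ (N:ℝ) * ((2:ℝ) ^ (N:ℝ)) ^ (k+1) := by
        rw [hρ, ← Real.rpow_natCast (r * (2:ℝ)^(k+1)) N]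
        exact rpow_mul_pow_helper hr (by norm_num) (N:ℝ) (k+1)
      have e3 : ((2:ℝ) ^ ((N:ℝ) - q)) = (2:ℝ) ^ (N:ℝ) * (2:ℝ) ^ (-q) := by
        rw [← Real.rpow_add (by norm_num)]; ring_nf
      have e4 : r ^ ((N:ℝ) - q) = r ^ (N:ℝ) * r ^ (-q) := by
        rw [← Real.rpow_add hr]; ring_nf
      have e5 : ((2:ℝ) ^ (N:ℝ)) ^ (k+1) = (2:ℝ)^(N:ℝ) * ((2:ℝ)^(N:ℝ))^k := pow_succ' _ _
      rw [e1, e2, e3, e4, e5, mul_pow]; ring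
    calc ∫⁻ y in A k, ENNReal.ofReal (‖x - y‖ ^ (-q))
        ≤ ENNReal.ofReal (ρ k ^ (-q)) * (ENNReal.ofReal (ρ (k+1) ^ N) * v) :=
          h1.trans (mul_le_mul_right h2 _)
      _ = ENNReal.ofReal (ρ k ^ (-q) * ρ (k+1) ^ N) * v := by
          rw [← mul_assoc, ← ENNReal.ofReal_mul (Real.rpow_nonneg (hρpos _).le _)]
      _ = (ENNReal.ofReal ((2:ℝ) ^ (N:ℝ)) * ENNReal.ofReal (r ^ ((N:ℝ) - q)) * v) * w ^ k := by
          rw [hkey, ENNReal.ofReal_mul (by positivity), ENNReal.ofReal_mul (by positivity),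
            ENNReal.ofReal_pow (by positivity), ← hwdef]
          ring
  calc ∫⁻ y in (ball x r)ᶜ, ENNReal.ofReal (‖x - y‖ ^ (-q))
      ≤ ∑' k, ∫⁻ y in A k, ENNReal.ofReal (‖x - y‖ ^ (-q)) := hstep1
    _ ≤ ∑' k, (ENNReal.ofReal ((2:ℝ) ^ (N:ℝ)) * ENNReal.ofReal (r ^ ((N:ℝ) - q)) * v) * w ^ k :=
        ENNReal.tsum_le_tsum hterm
    _ = (ENNReal.ofReal ((2:ℝ) ^ (N:ℝ)) * ENNReal.ofReal (r ^ ((N:ℝ) - q)) * v) * (1 - w)⁻¹ := by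
        rw [ENNReal.tsum_mul_left, ENNReal.tsum_geometric]
    _ = ENNReal.ofReal ((2:ℝ) ^ (N:ℝ)) * (1 - w)⁻¹ * v * ENNReal.ofReal (r ^ ((N:ℝ) - q)) := by
        ring

lemma kernel_weight_bound (N : ℕ) (hN3 : 3 ≤ N) (b : ℝ) (hb1 : 1 < b) (hbN : b < N) :
    ∃ C : ℝ≥0∞, C ≠ ∞ ∧ ∀ x : EuclideanSpace ℝ (Fin N),
      ∫⁻ y, ENNReal.ofReal ((1 + ‖y‖^2) ^ (-b/2) * ‖x - y‖ ^ (1 - (N:ℝ)))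
        ≤ C * ENNReal.ofReal ((1 + ‖x‖^2) ^ ((1-b)/2)) := by
  classical
  set E := EuclideanSpace ℝ (Fin N)
  have hN1 : 1 ≤ N := by omega
  have hN1' : (1:ℝ) ≤ (N:ℝ) := by exact_mod_cast hN1
  obtain ⟨C₀, hC₀fin, hC₀⟩ := lintegral_ball_rpow_le N hN1 (1 - (N:ℝ))
    (by linarith) (by linarith)
  obtain ⟨C₁, hC₁fin, hC₁⟩ := lintegral_ball_rpow_le N hN1 (-b)
    (by linarith) (by linarith)
  obtain ⟨C₂, hC₂fin, hC₂⟩ := lintegral_compl_ball_rpow_le N hN1 ((N:ℝ) - 1 + b)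
    (by linarith)
  refine ⟨C₀ * ENNReal.ofReal ((4:ℝ)^b / 2) + C₁ * ENNReal.ofReal ((2:ℝ)^(b-1))
      + ENNReal.ofReal ((3:ℝ)^b * (2:ℝ)^(b-1)) * C₂, ?_, ?_⟩
  · refine ENNReal.add_ne_top.2 ⟨ENNReal.add_ne_top.2 ⟨?_, ?_⟩, ?_⟩
    · exact ENNReal.mul_ne_top hC₀fin ENNReal.ofReal_ne_top
    · exact ENNReal.mul_ne_top hC₁fin ENNReal.ofReal_ne_top
    · exact ENNReal.mul_ne_top ENNReal.ofReal_ne_top hC₂fin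
  intro x
  set w : E → ℝ := fun y => 1 + ‖y‖^2 with hw
  have hw0 : ∀ y, (0:ℝ) < w y := fun y => by positivity
  have hwsq : ∀ y : E, Real.sqrt (w y) ^ 2 = w y := fun y => Real.sq_sqrt (hw0 y).le
  have hws1 : ∀ y : E, (1:ℝ) ≤ Real.sqrt (w y) := by
    intro y
    have hwy : w y = 1 + ‖y‖ ^ 2 := rfl
    rw [show (1:ℝ) = Real.sqrt 1 from Real.sqrt_one.symm]
    exact Real.sqrt_le_sqrt (by rw [hwy]; nlinarith [sq_nonneg ‖y‖])
  have hwsn : ∀ y : E, ‖y‖ ≤ Real.sqrt (w y) := by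
    intro y
    have hwy : w y = 1 + ‖y‖ ^ 2 := rfl
    rw [show ‖y‖ = Real.sqrt (‖y‖^2) from (Real.sqrt_sq (norm_nonneg y)).symm]
    exact Real.sqrt_le_sqrt (by rw [hwy]; nlinarith)
  have hwpow : ∀ y : E, w y ^ (-b/2) = Real.sqrt (w y) ^ (-b) := by
    intro y
    conv_lhs => rw [← hwsq y]
    rw [← Real.rpow_natCast (Real.sqrt (w y)) 2, ← Real.rpow_mul (Real.sqrt_nonneg _)]
    push_cast
    rw [show (2:ℝ) * (-b/2) = -b by ring]
  set R : ℝ := Real.sqrt (w x) with hR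
  have hR1 : (1:ℝ) ≤ R := hws1 x
  have hRpos : (0:ℝ) < R := by linarith
  have hR2 : R ^ 2 = 1 + ‖x‖^2 := hwsq x
  have hxR : ‖x‖ ≤ R := hwsn x
  have hRtarget : (1 + ‖x‖^2 : ℝ) ^ ((1-b)/2) = R ^ (1-b) := by
    conv_lhs => rw [← hR2]
    rw [← Real.rpow_natCast R 2, ← Real.rpow_mul hRpos.le]
    push_cast
    rw [show (2:ℝ) * ((1-b)/2) = 1-b by ring]
  -- measurability
  have mw : Measurable fun y : E => ENNReal.ofReal (w y ^ (-b/2)) :=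
    ((measurable_const.add (measurable_norm.pow_const 2)).pow_const _).ennreal_ofReal
  have mker : Measurable fun y : E => ENNReal.ofReal (‖x - y‖ ^ (1 - (N:ℝ))) :=
    (((measurable_const.sub measurable_id).norm).pow_const _).ennreal_ofReal
  set F : E → ℝ≥0∞ := fun y => ENNReal.ofReal (w y ^ (-b/2) * ‖x - y‖ ^ (1 - (N:ℝ))) with hF
  set B1 : Set E := ball x (R/2) with hB1
  set B2 : Set E := ball (0:E) (R/2) with hB2
  have hsplit : ∫⁻ y, F y ≤ (∫⁻ y in B1, F y) + (∫⁻ y in B2 \ B1, F y)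
      + ∫⁻ y in (B1 ∪ B2)ᶜ, F y := by
    have hm : MeasurableSet (B1 ∪ B2) := (measurableSet_ball.union measurableSet_ball)
    calc ∫⁻ y, F y = (∫⁻ y in B1 ∪ B2, F y) + ∫⁻ y in (B1 ∪ B2)ᶜ, F y :=
          (lintegral_add_compl F hm).symm
      _ ≤ ((∫⁻ y in B1, F y) + (∫⁻ y in B2 \ B1, F y)) + ∫⁻ y in (B1 ∪ B2)ᶜ, F y := by
          gcongr
          calc ∫⁻ y in B1 ∪ B2, F y = ∫⁻ y in B1 ∪ (B2 \ B1), F y := by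
                rw [union_diff_self]
            _ ≤ _ := lintegral_union_le _ _ _
      _ = _ := by ring
  -- Region 1
  have h1 : ∫⁻ y in B1, F y ≤ C₀ * ENNReal.ofReal ((4:ℝ)^b / 2) * ENNReal.ofReal (R^(1-b)) := by
    have hwB1 : ∀ y ∈ B1, w y ^ (-b/2) ≤ (4:ℝ)^b * R^(-b) := by
      intro y hy
      have hxy : ‖x - y‖ < R/2 := by
        rw [mem_ball, dist_eq_norm, ← norm_sub_rev] at hy; exact hy
      have hsy : R/4 ≤ Real.sqrt (w y) := by
        rcases le_or_gt ‖x‖ (3*R/4) with hc | hc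
        · have h4 : R ≤ 2 := by
            nlinarith [hR2, hc, hRpos, sq_nonneg (R - 2), norm_nonneg x]
          linarith [hws1 y]
        · have h5 : ‖x‖ ≤ ‖x - y‖ + ‖y‖ := by
            calc ‖x‖ = ‖(x - y) + y‖ := by rw [sub_add_cancel]
              _ ≤ ‖x - y‖ + ‖y‖ := norm_add_le _ _
          have h6 : R/4 ≤ ‖y‖ := by linarith
          linarith [hwsn y]
      have h7 : Real.sqrt (w y) ^ (-b) ≤ (R/4) ^ (-b) :=
        Real.rpow_le_rpow_of_nonpos (by linarith) hsy (by linarith)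
      have h8 : (R/4 : ℝ) ^ (-b) = (4:ℝ)^b * R^(-b) := by
        rw [Real.div_rpow hRpos.le (by norm_num), Real.rpow_neg (by norm_num : (0:ℝ) ≤ 4),
          div_eq_mul_inv, inv_inv]
        ring
      rw [hwpow y]; rw [h8] at h7; exact h7
    have step : ∫⁻ y in B1, F y
        ≤ ENNReal.ofReal ((4:ℝ)^b * R^(-b)) * ∫⁻ y in B1, ENNReal.ofReal (‖x - y‖ ^ (1 - (N:ℝ))) := by
      rw [← lintegral_const_mul _ mker]
      refine setLIntegral_mono (measurable_const.mul mker) fun y hy => ?_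
      rw [← ENNReal.ofReal_mul (by positivity)]
      exact ENNReal.ofReal_le_ofReal
        (mul_le_mul_of_nonneg_right (hwB1 y hy) (Real.rpow_nonneg (norm_nonneg _) _))
    have hball : ∫⁻ y in B1, ENNReal.ofReal (‖x - y‖ ^ (1 - (N:ℝ)))
        ≤ C₀ * ENNReal.ofReal (R/2) := by
      have := hC₀ x (R/2) (by linarith)
      have he : (N:ℝ) + (1 - (N:ℝ)) = 1 := by ring
      rw [he, Real.rpow_one] at this
      exact this
    calc ∫⁻ y in B1, F y ≤ ENNReal.ofReal ((4:ℝ)^b * R^(-b)) * (C₀ * ENNReal.ofReal (R/2)) :=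
          step.trans (mul_le_mul_right hball _)
      _ = C₀ * (ENNReal.ofReal ((4:ℝ)^b * R^(-b)) * ENNReal.ofReal (R/2)) := by ring
      _ = C₀ * ENNReal.ofReal ((4:ℝ)^b * R^(-b) * (R/2)) := by
          rw [← ENNReal.ofReal_mul (by positivity)]
      _ = C₀ * ENNReal.ofReal ((4:ℝ)^b / 2 * R^(1-b)) := by
          congr 1
          rw [show (1:ℝ) - b = -b + 1 by ring, Real.rpow_add hRpos, Real.rpow_one]
          ring
      _ = C₀ * ENNReal.ofReal ((4:ℝ)^b / 2) * ENNReal.ofReal (R^(1-b)) := by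
          rw [ENNReal.ofReal_mul (by positivity), mul_assoc]
  -- Region 2
  have h2 : ∫⁻ y in B2 \ B1, F y
      ≤ C₁ * ENNReal.ofReal ((2:ℝ)^(b-1)) * ENNReal.ofReal (R^(1-b)) := by
    have step : ∫⁻ y in B2 \ B1, F y
        ≤ ENNReal.ofReal ((R/2) ^ (1 - (N:ℝ))) * ∫⁻ y in B2, ENNReal.ofReal (w y ^ (-b/2)) := by
      calc ∫⁻ y in B2 \ B1, F y
          ≤ ∫⁻ y in B2 \ B1, ENNReal.ofReal ((R/2) ^ (1 - (N:ℝ))) * ENNReal.ofReal (w y ^ (-b/2)) := by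
            refine setLIntegral_mono (measurable_const.mul mw) fun y hy => ?_
            have hxy : R/2 ≤ ‖x - y‖ := by
              have := hy.2
              rw [hB1, mem_ball, dist_eq_norm, ← norm_sub_rev] at this
              linarith [not_lt.1 this]
            have hker : ‖x - y‖ ^ (1 - (N:ℝ)) ≤ (R/2) ^ (1 - (N:ℝ)) :=
              Real.rpow_le_rpow_of_nonpos (by linarith) hxy (by linarith)
            rw [← ENNReal.ofReal_mul (by positivity)]
            refine ENNReal.ofReal_le_ofReal ?_
            calc w y ^ (-b/2) * ‖x - y‖ ^ (1 - (N:ℝ))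
                ≤ w y ^ (-b/2) * (R/2) ^ (1 - (N:ℝ)) :=
                  mul_le_mul_of_nonneg_left hker (Real.rpow_nonneg (hw0 y).le _)
              _ = (R/2) ^ (1 - (N:ℝ)) * w y ^ (-b/2) := by ring
        _ ≤ ∫⁻ y in B2, ENNReal.ofReal ((R/2) ^ (1 - (N:ℝ))) * ENNReal.ofReal (w y ^ (-b/2)) :=
            lintegral_mono_set diff_subset
        _ = ENNReal.ofReal ((R/2) ^ (1 - (N:ℝ))) * ∫⁻ y in B2, ENNReal.ofReal (w y ^ (-b/2)) :=
            lintegral_const_mul _ mw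
    have hB2bound : ∫⁻ y in B2, ENNReal.ofReal (w y ^ (-b/2))
        ≤ C₁ * ENNReal.ofReal ((R/2) ^ ((N:ℝ) - b)) := by
      have hae : ∀ᵐ (y : E), y ∈ B2 → ENNReal.ofReal (w y ^ (-b/2))
          ≤ ENNReal.ofReal (‖(0:E) - y‖ ^ (-b)) := by
        have h0 : ∀ᵐ (y : E), y ≠ (0:E) := by
          haveI : Nontrivial E := Module.nontrivial_of_finrank_pos (R := ℝ)
            (by rw [finrank_euclideanSpace_fin]; omega)
          refine ae_iff.2 ?_
          simpa using measure_singleton (0:E)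
        filter_upwards [h0] with y hy0 _
        have hny : 0 < ‖y‖ := norm_pos_iff.2 hy0
        rw [hwpow y, zero_sub, norm_neg]
        exact ENNReal.ofReal_le_ofReal
          (Real.rpow_le_rpow_of_nonpos hny (hwsn y) (by linarith))
      have mg : Measurable fun y : E => ENNReal.ofReal (‖(0:E) - y‖ ^ (-b)) :=
        (((measurable_const.sub measurable_id).norm).pow_const _).ennreal_ofReal
      calc ∫⁻ y in B2, ENNReal.ofReal (w y ^ (-b/2))
          ≤ ∫⁻ y in B2, ENNReal.ofReal (‖(0:E) - y‖ ^ (-b)) := by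
            exact setLIntegral_mono_ae mg.aemeasurable hae
        _ ≤ C₁ * ENNReal.ofReal ((R/2) ^ ((N:ℝ) + -b)) := hC₁ 0 (R/2) (by linarith)
        _ = C₁ * ENNReal.ofReal ((R/2) ^ ((N:ℝ) - b)) := by
            rw [show (N:ℝ) + -b = (N:ℝ) - b by ring]
    have hmul2 : (2:ℝ)^(b-1) * (2:ℝ)^(1-b) = 1 := by
      rw [← Real.rpow_add (by norm_num : (0:ℝ) < 2)]; norm_num
    have hhalf : (R/2 : ℝ) ^ (1-b) = (2:ℝ)^(b-1) * R^(1-b) := by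
      rw [Real.div_rpow hRpos.le (by norm_num),
        div_eq_iff (Real.rpow_pos_of_pos (by norm_num : (0:ℝ) < 2) (1-b)).ne']
      linear_combination (-(R^(1-b))) * hmul2
    have hRsimp : (R/2 : ℝ) ^ (1 - (N:ℝ)) * (R/2) ^ ((N:ℝ) - b) = (2:ℝ)^(b-1) * R^(1-b) := by
      rw [← Real.rpow_add (by linarith : (0:ℝ) < R/2)]
      have he : (1 - (N:ℝ)) + ((N:ℝ) - b) = 1 - b := by ring
      rw [he, hhalf]
    calc ∫⁻ y in B2 \ B1, F y
        ≤ ENNReal.ofReal ((R/2) ^ (1 - (N:ℝ))) * (C₁ * ENNReal.ofReal ((R/2) ^ ((N:ℝ) - b))) :=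
          step.trans (mul_le_mul_right hB2bound _)
      _ = C₁ * ENNReal.ofReal ((R/2) ^ (1 - (N:ℝ)) * (R/2) ^ ((N:ℝ) - b)) := by
          rw [ENNReal.ofReal_mul (by positivity)]; ring
      _ = C₁ * ENNReal.ofReal ((2:ℝ)^(b-1) * R^(1-b)) := by rw [hRsimp]
      _ = C₁ * ENNReal.ofReal ((2:ℝ)^(b-1)) * ENNReal.ofReal (R^(1-b)) := by
          rw [ENNReal.ofReal_mul (by positivity), mul_assoc]
  -- Region 3
  have h3 : ∫⁻ y in (B1 ∪ B2)ᶜ, F y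
      ≤ ENNReal.ofReal ((3:ℝ)^b * (2:ℝ)^(b-1)) * C₂ * ENNReal.ofReal (R^(1-b)) := by
    have step : ∫⁻ y in (B1 ∪ B2)ᶜ, F y
        ≤ ENNReal.ofReal ((3:ℝ)^b)
          * ∫⁻ y in (ball x (R/2))ᶜ, ENNReal.ofReal (‖x - y‖ ^ (-((N:ℝ) - 1 + b))) := by
      have mg : Measurable fun y : E => ENNReal.ofReal (‖x - y‖ ^ (-((N:ℝ) - 1 + b))) :=
        (((measurable_const.sub measurable_id).norm).pow_const _).ennreal_ofReal
      calc ∫⁻ y in (B1 ∪ B2)ᶜ, F y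
          ≤ ∫⁻ y in (B1 ∪ B2)ᶜ,
              ENNReal.ofReal ((3:ℝ)^b) * ENNReal.ofReal (‖x - y‖ ^ (-((N:ℝ) - 1 + b))) := by
            refine setLIntegral_mono (measurable_const.mul mg) fun y hy => ?_
            simp only [mem_compl_iff, mem_union, not_or] at hy
            have hxy : R/2 ≤ ‖x - y‖ := by
              have := hy.1
              rw [hB1, mem_ball, dist_eq_norm, ← norm_sub_rev] at this
              linarith [not_lt.1 this]
            have hyn : R/2 ≤ ‖y‖ := by
              have := hy.2
              rw [hB2, mem_ball, dist_zero_right] at this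
              linarith [not_lt.1 this]
            have hxypos : (0:ℝ) < ‖x - y‖ := by linarith
            have hcompare : ‖x - y‖ / 3 ≤ ‖y‖ := by
              have : ‖x - y‖ ≤ ‖x‖ + ‖y‖ := norm_sub_le _ _
              linarith
            have hwb : w y ^ (-b/2) ≤ (3:ℝ)^b * ‖x - y‖ ^ (-b) := by
              rw [hwpow y]
              have s1 : Real.sqrt (w y) ^ (-b) ≤ (‖x - y‖/3) ^ (-b) :=
                Real.rpow_le_rpow_of_nonpos (by linarith) (hcompare.trans (hwsn y)) (by linarith)
              have s2 : (‖x - y‖/3 : ℝ) ^ (-b) = (3:ℝ)^b * ‖x - y‖^(-b) := by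
                rw [Real.div_rpow hxypos.le (by norm_num),
                  Real.rpow_neg (by norm_num : (0:ℝ) ≤ 3), div_eq_mul_inv, inv_inv]
                ring
              rw [s2] at s1; exact s1
            rw [← ENNReal.ofReal_mul (by positivity)]
            refine ENNReal.ofReal_le_ofReal ?_
            calc w y ^ (-b/2) * ‖x - y‖ ^ (1 - (N:ℝ))
                ≤ ((3:ℝ)^b * ‖x - y‖ ^ (-b)) * ‖x - y‖ ^ (1 - (N:ℝ)) :=
                  mul_le_mul_of_nonneg_right hwb (Real.rpow_nonneg (norm_nonneg _) _)
              _ = (3:ℝ)^b * ‖x - y‖ ^ (-((N:ℝ) - 1 + b)) := by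
                  rw [mul_assoc, ← Real.rpow_add hxypos]
                  congr 2
                  ring
        _ ≤ ∫⁻ y in (ball x (R/2))ᶜ,
              ENNReal.ofReal ((3:ℝ)^b) * ENNReal.ofReal (‖x - y‖ ^ (-((N:ℝ) - 1 + b))) := by
            refine lintegral_mono_set (compl_subset_compl.2 ?_)
            exact subset_union_left
        _ = _ := lintegral_const_mul _ mg
    have hext : ∫⁻ y in (ball x (R/2))ᶜ, ENNReal.ofReal (‖x - y‖ ^ (-((N:ℝ) - 1 + b)))
        ≤ C₂ * ENNReal.ofReal ((R/2) ^ (1 - b)) := by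
      have := hC₂ x (R/2) (by linarith)
      have he : (N:ℝ) - ((N:ℝ) - 1 + b) = 1 - b := by ring
      rw [he] at this
      exact this
    have hmul2 : (2:ℝ)^(b-1) * (2:ℝ)^(1-b) = 1 := by
      rw [← Real.rpow_add (by norm_num : (0:ℝ) < 2)]; norm_num
    have hRsimp : ((R:ℝ)/2) ^ (1-b) = (2:ℝ)^(b-1) * R^(1-b) := by
      rw [Real.div_rpow hRpos.le (by norm_num),
        div_eq_iff (Real.rpow_pos_of_pos (by norm_num : (0:ℝ) < 2) (1-b)).ne']
      linear_combination (-(R^(1-b))) * hmul2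
    calc ∫⁻ y in (B1 ∪ B2)ᶜ, F y
        ≤ ENNReal.ofReal ((3:ℝ)^b) * (C₂ * ENNReal.ofReal ((R/2) ^ (1-b))) :=
          step.trans (mul_le_mul_right hext _)
      _ = ENNReal.ofReal ((3:ℝ)^b) * C₂ * (ENNReal.ofReal ((2:ℝ)^(b-1)) * ENNReal.ofReal (R^(1-b))) := by
          rw [hRsimp, ENNReal.ofReal_mul (by positivity)]
          ring
      _ = ENNReal.ofReal ((3:ℝ)^b * (2:ℝ)^(b-1)) * C₂ * ENNReal.ofReal (R^(1-b)) := by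
          rw [ENNReal.ofReal_mul (by positivity)]
          ring
  rw [hRtarget]
  calc ∫⁻ y, F y ≤ (∫⁻ y in B1, F y) + (∫⁻ y in B2 \ B1, F y) + ∫⁻ y in (B1 ∪ B2)ᶜ, F y := hsplit
    _ ≤ C₀ * ENNReal.ofReal ((4:ℝ)^b / 2) * ENNReal.ofReal (R^(1-b))
        + C₁ * ENNReal.ofReal ((2:ℝ)^(b-1)) * ENNReal.ofReal (R^(1-b))
        + ENNReal.ofReal ((3:ℝ)^b * (2:ℝ)^(b-1)) * C₂ * ENNReal.ofReal (R^(1-b)) := by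
        gcongr
    _ = _ := by ring

/-- The `J = 0` case of the kernel boundedness from the proof of Lemma 3.15: the integral
operator with kernel `|x - y|^(1-N)` is bounded from `L²_s(ℝ^N)` to `L²_t(ℝ^N)` for
`s > 1/2`, `t < -1/2` and `t ≤ s - (N+1)/2`. -/
theorem kernel_boundedness_weighted_L2_J_zero
    (N : ℕ) (hN3 : 3 ≤ N) (hNodd : Odd N)
    (s t : ℝ) (hs : 1 / 2 < s) (ht : t < -(1 / 2)) (hts : t ≤ s - ((N : ℝ) + 1) / 2) :
    ∃ C : ℝ, 0 < C ∧
      ∀ f : EuclideanSpace ℝ (Fin N) → ℂ, Measurable f →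
        Integrable (fun y => (1 + ‖y‖ ^ 2) ^ s * ‖f y‖ ^ 2) →
        (∀ᵐ x : EuclideanSpace ℝ (Fin N),
            Integrable (fun y => ‖x - y‖ ^ (1 - (N : ℝ)) • f y)) ∧
          (∫ x : EuclideanSpace ℝ (Fin N),
              (1 + ‖x‖ ^ 2) ^ t *
                ‖∫ y : EuclideanSpace ℝ (Fin N), ‖x - y‖ ^ (1 - (N : ℝ)) • f y‖ ^ 2)
            ≤ C ^ 2 * ∫ y : EuclideanSpace ℝ (Fin N), (1 + ‖y‖ ^ 2) ^ s * ‖f y‖ ^ 2 := by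
  classical
  have hN3' : (3:ℝ) ≤ (N:ℝ) := by exact_mod_cast hN3
  set a := max (3/2 : ℝ) (t + 5/2) with hadef
  have ha1 : (1:ℝ) < a := lt_of_lt_of_le (by norm_num) (le_max_left _ _)
  have ha2 : a < 2 := max_lt (by norm_num) (by linarith)
  have hat : t + 5/2 ≤ a := le_max_right _ _
  set b' := min (a - 2*t - 1) ((N:ℝ) - 1/2) with hb'def
  have hb'1 : (1:ℝ) < b' := lt_min (by linarith) (by linarith)
  have hb'N : b' < (N:ℝ) := lt_of_le_of_lt (min_le_right _ _) (by linarith)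
  have hb'le : b' ≤ a - 2*t - 1 := min_le_left _ _
  obtain ⟨C₁, hC₁fin, hC₁⟩ := kernel_weight_bound N hN3 a ha1 (by linarith)
  obtain ⟨C₂, hC₂fin, hC₂⟩ := kernel_weight_bound N hN3 b' hb'1 hb'N
  have hexp : (a + 1 - b')/2 ≤ s := by
    rcases min_cases (a - 2*t - 1) ((N:ℝ) - 1/2) with ⟨h, _⟩ | ⟨h, _⟩ <;>
      rw [hb'def, h] <;> linarith
  set Ct := C₁ * C₂ with hCt
  have hCtfin : Ct ≠ ∞ := ENNReal.mul_ne_top hC₁fin hC₂fin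
  set E := EuclideanSpace ℝ (Fin N) with hE
  refine ⟨Ct.toReal + 1, by positivity, ?_⟩
  intro f hf hf2
  -- basic notation
  have hw0 : ∀ y : E, (0:ℝ) < 1 + ‖y‖^2 := fun y => by positivity
  have hw1 : ∀ y : E, (1:ℝ) ≤ 1 + ‖y‖^2 := fun y => by nlinarith [sq_nonneg ‖y‖]
  set K : E → E → ℝ≥0∞ := fun x y => ENNReal.ofReal (‖x - y‖ ^ (1 - (N:ℝ))) with hK
  set g : E → ℝ≥0∞ := fun y => (‖f y‖₊ : ℝ≥0∞) with hg
  -- measurability infra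
  have mwe : ∀ e : ℝ, Measurable fun y : E => ENNReal.ofReal ((1 + ‖y‖^2) ^ e) := fun e =>
    ((measurable_const.add (measurable_norm.pow_const 2)).pow_const _).ennreal_ofReal
  have mKp : Measurable fun p : E × E => K p.1 p.2 :=
    (((measurable_fst.sub measurable_snd).norm).pow_const _).ennreal_ofReal
  have mKx : ∀ x : E, Measurable fun y => K x y := fun x =>
    (((measurable_const.sub measurable_id).norm).pow_const _).ennreal_ofReal
  have mKy : ∀ y : E, Measurable fun x => K x y := fun y =>
    (((measurable_id.sub measurable_const).norm).pow_const _).ennreal_ofReal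
  have mg : Measurable g := hf.enorm
  set T : E → ℝ≥0∞ := fun x => ∫⁻ y, K x y * g y with hT
  have mT : Measurable T :=
    Measurable.lintegral_prod_right (f := fun x y => K x y * g y)
      (mKp.mul (mg.comp measurable_snd))
  set Φ : E → ℝ≥0∞ := fun x =>
    ∫⁻ y, K x y * ENNReal.ofReal ((1 + ‖y‖^2) ^ (a/2)) * g y ^ 2 with hΦ
  have mΦ : Measurable Φ :=
    Measurable.lintegral_prod_right (f := fun x y => K x y * ENNReal.ofReal ((1 + ‖y‖^2) ^ (a/2)) * g y ^ 2)
      ((mKp.mul ((mwe (a/2)).comp measurable_snd)).mul ((mg.comp measurable_snd).pow_const 2))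
  -- ENNReal sqrt-square helper
  have hsq : ∀ A : ℝ≥0∞, (A ^ (1/2:ℝ)) ^ 2 = A := by
    intro A
    rw [← ENNReal.rpow_natCast (A ^ (1/2:ℝ)) 2, ← ENNReal.rpow_mul]
    push_cast
    rw [show (1/2:ℝ) * 2 = 1 by ring, ENNReal.rpow_one]
  -- Cauchy-Schwarz
  have hCS : ∀ x : E, T x ^ 2
      ≤ (∫⁻ y, K x y * ENNReal.ofReal ((1 + ‖y‖^2) ^ (-a/2))) * Φ x := by
    intro x
    set u : E → ℝ≥0∞ := fun y => K x y * ENNReal.ofReal ((1 + ‖y‖^2) ^ (-a/2)) with hu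
    set u' : E → ℝ≥0∞ := fun y => K x y * ENNReal.ofReal ((1 + ‖y‖^2) ^ (a/2)) * g y ^ 2 with hu'
    have hmu : AEMeasurable (fun y => (u y) ^ (1/2:ℝ)) volume :=
      (((mKx x).mul (mwe _)).pow_const _).aemeasurable
    have hmu' : AEMeasurable (fun y => (u' y) ^ (1/2:ℝ)) volume :=
      ((((mKx x).mul (mwe _)).mul (mg.pow_const 2)).pow_const _).aemeasurable
    have hpt : ∀ y, K x y * g y = (u y) ^ (1/2:ℝ) * (u' y) ^ (1/2:ℝ) := by
      intro y
      rw [← ENNReal.mul_rpow_of_nonneg _ _ (by norm_num : (0:ℝ) ≤ 1/2)]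
      have hww : ENNReal.ofReal ((1 + ‖y‖^2) ^ (-a/2)) * ENNReal.ofReal ((1 + ‖y‖^2) ^ (a/2))
          = 1 := by
        rw [← ENNReal.ofReal_mul (Real.rpow_nonneg (hw0 y).le _), ← Real.rpow_add (hw0 y),
          show -a/2 + a/2 = 0 by ring, Real.rpow_zero, ENNReal.ofReal_one]
      have huu : u y * u' y = (K x y * g y) ^ 2 := by
        calc u y * u' y
            = (K x y * g y) ^ 2 * (ENNReal.ofReal ((1 + ‖y‖^2) ^ (-a/2))
                * ENNReal.ofReal ((1 + ‖y‖^2) ^ (a/2))) := by rw [hu, hu']; ring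
          _ = (K x y * g y) ^ 2 := by rw [hww, mul_one]
      rw [huu, ← ENNReal.rpow_natCast (K x y * g y) 2, ← ENNReal.rpow_mul]
      push_cast
      rw [show (2:ℝ) * (1/2) = 1 by ring, ENNReal.rpow_one]
    have hconj : (2:ℝ).HolderConjugate 2 := Real.HolderConjugate.two_two
    have hhold := ENNReal.lintegral_mul_le_Lp_mul_Lq volume hconj hmu hmu'
    have hTle : T x ≤ (∫⁻ y, u y) ^ (1/2:ℝ) * (∫⁻ y, u' y) ^ (1/2:ℝ) := by
      calc T x = ∫⁻ y, (fun y => (u y) ^ (1/2:ℝ)) y * (fun y => (u' y) ^ (1/2:ℝ)) y := by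
            rw [hT]; exact lintegral_congr fun y => hpt y
        _ ≤ (∫⁻ y, ((u y) ^ (1/2:ℝ)) ^ (2:ℝ)) ^ (1/(2:ℝ))
            * (∫⁻ y, ((u' y) ^ (1/2:ℝ)) ^ (2:ℝ)) ^ (1/(2:ℝ)) := hhold
        _ = (∫⁻ y, u y) ^ (1/2:ℝ) * (∫⁻ y, u' y) ^ (1/2:ℝ) := by
            congr 1
            · congr 1
              refine lintegral_congr fun y => ?_
              rw [← ENNReal.rpow_mul, show (1/2:ℝ) * 2 = 1 by ring, ENNReal.rpow_one]
            · congr 1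
              refine lintegral_congr fun y => ?_
              rw [← ENNReal.rpow_mul, show (1/2:ℝ) * 2 = 1 by ring, ENNReal.rpow_one]
    calc T x ^ 2 ≤ ((∫⁻ y, u y) ^ (1/2:ℝ) * (∫⁻ y, u' y) ^ (1/2:ℝ)) ^ 2 := by
          exact pow_le_pow_left' hTle 2
      _ = (∫⁻ y, u y) * (∫⁻ y, u' y) := by
          rw [mul_pow, hsq, hsq]
  -- bound on H
  have hHx : ∀ x : E, (∫⁻ y, K x y * ENNReal.ofReal ((1 + ‖y‖^2) ^ (-a/2)))
      ≤ C₁ * ENNReal.ofReal ((1 + ‖x‖^2) ^ ((1-a)/2)) := by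
    intro x
    calc ∫⁻ y, K x y * ENNReal.ofReal ((1 + ‖y‖^2) ^ (-a/2))
        = ∫⁻ y, ENNReal.ofReal ((1 + ‖y‖^2) ^ (-a/2) * ‖x - y‖ ^ (1 - (N:ℝ))) := by
          refine lintegral_congr fun y => ?_
          rw [ENNReal.ofReal_mul (Real.rpow_nonneg (hw0 y).le _), mul_comm]
      _ ≤ C₁ * ENNReal.ofReal ((1 + ‖x‖^2) ^ ((1-a)/2)) := hC₁ x
  -- weighted integral
  set P := ∫⁻ x, ENNReal.ofReal ((1 + ‖x‖^2) ^ t) * T x ^ 2 with hP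
  have hPstep : P ≤ C₁ * ∫⁻ x, ENNReal.ofReal ((1 + ‖x‖^2) ^ (-b'/2)) * Φ x := by
    rw [hP, ← lintegral_const_mul _ (f := fun x => ENNReal.ofReal ((1 + ‖x‖^2) ^ (-b'/2)) * Φ x) ((mwe _).mul mΦ)]
    refine lintegral_mono fun x => ?_
    calc ENNReal.ofReal ((1 + ‖x‖^2) ^ t) * T x ^ 2
        ≤ ENNReal.ofReal ((1 + ‖x‖^2) ^ t)
            * ((C₁ * ENNReal.ofReal ((1 + ‖x‖^2) ^ ((1-a)/2))) * Φ x) :=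
          mul_le_mul_right ((hCS x).trans (mul_le_mul_left (hHx x) _)) _
      _ = C₁ * (ENNReal.ofReal ((1 + ‖x‖^2) ^ t)
            * ENNReal.ofReal ((1 + ‖x‖^2) ^ ((1-a)/2)) * Φ x) := by ring
      _ = C₁ * (ENNReal.ofReal ((1 + ‖x‖^2) ^ (t + (1-a)/2)) * Φ x) := by
          rw [← ENNReal.ofReal_mul (Real.rpow_nonneg (hw0 x).le _),
            ← Real.rpow_add (hw0 x)]
      _ ≤ C₁ * (ENNReal.ofReal ((1 + ‖x‖^2) ^ (-b'/2)) * Φ x) := by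
          refine mul_le_mul_right (mul_le_mul_left ?_ _) _
          exact ENNReal.ofReal_le_ofReal
            (Real.rpow_le_rpow_of_exponent_le (hw1 x) (by linarith))
  -- Tonelli swap
  have hmprod : Measurable fun p : E × E =>
      ENNReal.ofReal ((1 + ‖p.1‖^2) ^ (-b'/2)) * K p.1 p.2
        * (ENNReal.ofReal ((1 + ‖p.2‖^2) ^ (a/2)) * g p.2 ^ 2) :=
    ((((mwe (-b'/2)).comp measurable_fst).mul mKp)).mul
      ((((mwe (a/2)).comp measurable_snd)).mul ((mg.comp measurable_snd).pow_const 2))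
  have hswap : ∫⁻ x, ENNReal.ofReal ((1 + ‖x‖^2) ^ (-b'/2)) * Φ x
      = ∫⁻ y, (∫⁻ x, ENNReal.ofReal ((1 + ‖x‖^2) ^ (-b'/2)) * K x y)
          * (ENNReal.ofReal ((1 + ‖y‖^2) ^ (a/2)) * g y ^ 2) := by
    calc ∫⁻ x, ENNReal.ofReal ((1 + ‖x‖^2) ^ (-b'/2)) * Φ x
        = ∫⁻ x, ∫⁻ y, ENNReal.ofReal ((1 + ‖x‖^2) ^ (-b'/2)) * K x y
            * (ENNReal.ofReal ((1 + ‖y‖^2) ^ (a/2)) * g y ^ 2) := by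
          refine lintegral_congr fun x => ?_
          rw [hΦ, ← lintegral_const_mul _ (f := fun y => K x y * ENNReal.ofReal ((1 + ‖y‖^2) ^ (a/2)) * g y ^ 2)
            (((mKx x).mul (mwe (a/2))).mul (mg.pow_const 2))]
          exact lintegral_congr fun y => by ring
      _ = ∫⁻ y, ∫⁻ x, ENNReal.ofReal ((1 + ‖x‖^2) ^ (-b'/2)) * K x y
            * (ENNReal.ofReal ((1 + ‖y‖^2) ^ (a/2)) * g y ^ 2) :=
          lintegral_lintegral_swap hmprod.aemeasurable
      _ = _ := by
          refine lintegral_congr fun y => ?_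
          exact lintegral_mul_const _ (((mwe (-b'/2)).mul (mKy y)))
  -- inner kernel bound
  have hinner : ∀ y : E, (∫⁻ x, ENNReal.ofReal ((1 + ‖x‖^2) ^ (-b'/2)) * K x y)
      ≤ C₂ * ENNReal.ofReal ((1 + ‖y‖^2) ^ ((1-b')/2)) := by
    intro y
    calc ∫⁻ x, ENNReal.ofReal ((1 + ‖x‖^2) ^ (-b'/2)) * K x y
        = ∫⁻ x, ENNReal.ofReal ((1 + ‖x‖^2) ^ (-b'/2) * ‖y - x‖ ^ (1 - (N:ℝ))) := by
          refine lintegral_congr fun x => ?_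
          rw [ENNReal.ofReal_mul (Real.rpow_nonneg (hw0 x).le _), hK]
          rw [norm_sub_rev]
      _ ≤ C₂ * ENNReal.ofReal ((1 + ‖y‖^2) ^ ((1-b')/2)) := hC₂ y
  set M := ∫⁻ y, ENNReal.ofReal ((1 + ‖y‖^2) ^ s) * g y ^ 2 with hM
  have hPM : P ≤ Ct * M := by
    refine hPstep.trans ?_
    rw [hCt, mul_assoc]
    refine mul_le_mul_right ?_ C₁
    rw [hswap]
    calc ∫⁻ y, (∫⁻ x, ENNReal.ofReal ((1 + ‖x‖^2) ^ (-b'/2)) * K x y)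
          * (ENNReal.ofReal ((1 + ‖y‖^2) ^ (a/2)) * g y ^ 2)
        ≤ ∫⁻ y, (C₂ * ENNReal.ofReal ((1 + ‖y‖^2) ^ ((1-b')/2)))
          * (ENNReal.ofReal ((1 + ‖y‖^2) ^ (a/2)) * g y ^ 2) :=
          lintegral_mono fun y => mul_le_mul_left (hinner y) _
      _ = C₂ * ∫⁻ y, ENNReal.ofReal ((1 + ‖y‖^2) ^ ((1-b')/2))
          * ENNReal.ofReal ((1 + ‖y‖^2) ^ (a/2)) * g y ^ 2 := by
          rw [← lintegral_const_mul _ (f := fun y => ENNReal.ofReal ((1 + ‖y‖^2) ^ ((1-b')/2)) * ENNReal.ofReal ((1 + ‖y‖^2) ^ (a/2)) * g y ^ 2) (((mwe _).mul (mwe _)).mul (mg.pow_const 2))]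
          exact lintegral_congr fun y => by ring
      _ ≤ C₂ * M := by
          refine mul_le_mul_right ?_ C₂
          rw [hM]
          refine lintegral_mono fun y => ?_
          refine mul_le_mul_left ?_ _
          rw [← ENNReal.ofReal_mul (Real.rpow_nonneg (hw0 y).le _),
            ← Real.rpow_add (hw0 y)]
          exact ENNReal.ofReal_le_ofReal
            (Real.rpow_le_rpow_of_exponent_le (hw1 y) (by linarith))
  -- M is finite
  have hMrepr : ∀ y : E, ENNReal.ofReal ((1 + ‖y‖^2) ^ s * ‖f y‖ ^ 2)
      = ENNReal.ofReal ((1 + ‖y‖^2) ^ s) * g y ^ 2 := by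
    intro y
    rw [ENNReal.ofReal_mul (Real.rpow_nonneg (hw0 y).le _)]
    congr 1
    rw [ENNReal.ofReal_pow (norm_nonneg _), hg, ofReal_norm, enorm_eq_nnnorm]
  have hMfin : M ≠ ∞ := by
    have h := hf2.hasFiniteIntegral
    rw [HasFiniteIntegral] at h
    have heq : M = ∫⁻ y, (‖(1 + ‖y‖^2) ^ s * ‖f y‖ ^ 2‖₊ : ℝ≥0∞) := by
      rw [hM]
      refine lintegral_congr fun y => ?_
      rw [← enorm_eq_nnnorm, Real.enorm_eq_ofReal (by positivity), hMrepr y]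
    rw [heq]
    exact h.ne
  have hPfin : P ≠ ∞ :=
    (hPM.trans_lt (ENNReal.mul_lt_top hCtfin.lt_top hMfin.lt_top)).ne
  -- a.e. finiteness of T
  have hTae : ∀ᵐ x : E, T x < ∞ := by
    have hmeas : Measurable fun x : E => ENNReal.ofReal ((1 + ‖x‖^2) ^ t) * T x ^ 2 :=
      (mwe t).mul (mT.pow_const 2)
    filter_upwards [ae_lt_top hmeas hPfin] with x hx
    rw [lt_top_iff_ne_top]
    intro hTx
    rw [hTx] at hx
    have h1 : ENNReal.ofReal ((1 + ‖x‖^2) ^ t) ≠ 0 := by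
      simp only [ne_eq, ENNReal.ofReal_eq_zero, not_le]
      exact Real.rpow_pos_of_pos (hw0 x) t
    rw [ENNReal.top_pow (by norm_num), ENNReal.mul_top h1] at hx
    exact absurd hx (lt_irrefl _)
  -- nnnorm identity
  have hnn : ∀ (x y : E), (‖(‖x - y‖ ^ (1 - (N:ℝ))) • f y‖₊ : ℝ≥0∞) = K x y * g y := by
    intro x y
    rw [nnnorm_smul, ENNReal.coe_mul, hK, hg]
    congr 1
    rw [← enorm_eq_nnnorm, ← ofReal_norm, Real.norm_eq_abs,
      abs_of_nonneg (Real.rpow_nonneg (norm_nonneg _) _)]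
  -- a.e. integrability
  have hInt : ∀ᵐ x : E, Integrable (fun y => ‖x - y‖ ^ (1 - (N:ℝ)) • f y) := by
    filter_upwards [hTae] with x hx
    constructor
    · exact (((measurable_const.sub measurable_id).norm.pow_const _).smul hf).aestronglyMeasurable
    · rw [HasFiniteIntegral]
      calc ∫⁻ y, (‖(‖x - y‖ ^ (1 - (N:ℝ))) • f y‖₊ : ℝ≥0∞)
          = ∫⁻ y, K x y * g y := lintegral_congr fun y => hnn x y
        _ < ∞ := hx
  refine ⟨hInt, ?_⟩
  -- strong measurability of the inner integral
  have hSM : StronglyMeasurable fun x : E => ∫ y, ‖x - y‖ ^ (1 - (N:ℝ)) • f y :=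
    (((measurable_fst.sub measurable_snd).norm.pow_const _).smul
      (hf.comp measurable_snd)).stronglyMeasurable.integral_prod_right'
  have hLHSmeas : Measurable fun x : E =>
      (1 + ‖x‖^2) ^ t * ‖∫ y, ‖x - y‖ ^ (1 - (N:ℝ)) • f y‖ ^ 2 :=
    ((measurable_const.add (measurable_norm.pow_const 2)).pow_const t).mul
      ((hSM.measurable.norm).pow_const 2)
  have hLHS : ∫ x, (1 + ‖x‖^2) ^ t * ‖∫ y, ‖x - y‖ ^ (1 - (N:ℝ)) • f y‖ ^ 2
      = (∫⁻ x, ENNReal.ofReal ((1 + ‖x‖^2) ^ t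
          * ‖∫ y, ‖x - y‖ ^ (1 - (N:ℝ)) • f y‖ ^ 2)).toReal := by
    rw [integral_eq_lintegral_of_nonneg_ae (ae_of_all _ fun x => by positivity)
      hLHSmeas.aestronglyMeasurable]
  have hRHS : ∫ y, (1 + ‖y‖^2) ^ s * ‖f y‖ ^ 2 = M.toReal := by
    rw [integral_eq_lintegral_of_nonneg_ae (ae_of_all _ fun y => by positivity)
      hf2.aestronglyMeasurable]
    congr 1
    exact lintegral_congr fun y => hMrepr y
  -- pointwise a.e. bound for lintegral of LHS
  have hptle : ∀ᵐ x : E, ENNReal.ofReal ((1 + ‖x‖^2) ^ t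
      * ‖∫ y, ‖x - y‖ ^ (1 - (N:ℝ)) • f y‖ ^ 2)
      ≤ ENNReal.ofReal ((1 + ‖x‖^2) ^ t) * T x ^ 2 := by
    filter_upwards [hTae] with x hTx
    rw [ENNReal.ofReal_mul (Real.rpow_nonneg (hw0 x).le _)]
    refine mul_le_mul_right ?_ _
    have h1 : ‖∫ y, ‖x - y‖ ^ (1 - (N:ℝ)) • f y‖
        ≤ ∫ y, ‖(‖x - y‖ ^ (1 - (N:ℝ))) • f y‖ := norm_integral_le_integral_norm _
    have hm2 : AEStronglyMeasurable (fun y : E => ‖(‖x - y‖ ^ (1 - (N:ℝ))) • f y‖) volume :=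
      ((((measurable_const.sub measurable_id).norm.pow_const _).smul
        hf).norm).aestronglyMeasurable
    have h2 : ∫ y, ‖(‖x - y‖ ^ (1 - (N:ℝ))) • f y‖ = (T x).toReal := by
      rw [integral_eq_lintegral_of_nonneg_ae (ae_of_all _ fun y => norm_nonneg _) hm2]
      congr 1
      refine lintegral_congr fun y => ?_
      rw [ofReal_norm, enorm_eq_nnnorm, hnn x y]
    have h3 : ‖∫ y, ‖x - y‖ ^ (1 - (N:ℝ)) • f y‖ ≤ (T x).toReal := h1.trans h2.le
    calc ENNReal.ofReal (‖∫ y, ‖x - y‖ ^ (1 - (N:ℝ)) • f y‖ ^ 2)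
        ≤ ENNReal.ofReal ((T x).toReal ^ 2) :=
          ENNReal.ofReal_le_ofReal (pow_le_pow_left₀ (norm_nonneg _) h3 2)
      _ = T x ^ 2 := by
          rw [ENNReal.ofReal_pow ENNReal.toReal_nonneg, ENNReal.ofReal_toReal hTx.ne]
  -- final chain
  calc ∫ x, (1 + ‖x‖^2) ^ t * ‖∫ y, ‖x - y‖ ^ (1 - (N:ℝ)) • f y‖ ^ 2
      = (∫⁻ x, ENNReal.ofReal ((1 + ‖x‖^2) ^ t
          * ‖∫ y, ‖x - y‖ ^ (1 - (N:ℝ)) • f y‖ ^ 2)).toReal := hLHS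
    _ ≤ (Ct * M).toReal := by
        refine ENNReal.toReal_mono (ENNReal.mul_ne_top hCtfin hMfin) ?_
        exact (lintegral_mono_ae hptle).trans hPM
    _ ≤ (Ct.toReal + 1) ^ 2 * M.toReal := by
        rw [ENNReal.toReal_mul]
        have h0 : (0:ℝ) ≤ M.toReal := ENNReal.toReal_nonneg
        have hc : Ct.toReal ≤ (Ct.toReal + 1)^2 := by
          nlinarith [sq_nonneg Ct.toReal, ENNReal.toReal_nonneg (a := Ct)]
        exact mul_le_mul_of_nonneg_right hc h0
    _ = (Ct.toReal + 1) ^ 2 * ∫ y, (1 + ‖y‖^2) ^ s * ‖f y‖ ^ 2 := by rw [hRHS]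
end
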